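/- Let a1, a2 > 0, b > −1, 0 < z < 1, and let L be the generalized-Hahn moment functional L[f] = Σ_{x=0}^{∞} f(x)·(a1)_x (a2)_x z^x / ((b+1)_x x!). Let (P_n)_{n≥0} be a monic orthogonal polynomial sequence for L with recurrence coefficients β_n, γ_n, and set u_n = β_n + β_{n−1} − n + b + 1 and v_n = β_n + β_{n−1} + n − 1 + a1 + a2. Then for all n ≥ 1 the first Laguerre–Freud equation holds: (1−z)·[(γ_{n+1}+γ_n) − (γ_n+γ_{n−1})] = z v_n·[(β_n+n) − (β_{n−1}+n−1)] − u_n·[(β_n−n) − (β_{n−1}−(n−1))]. -/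

import Mathlib

open Polynomial

namespace GHahn
open Filter

noncomputable def L (w : ℕ → ℝ) (p : ℝ[X]) : ℝ := ∑' x : ℕ, p.eval (x : ℝ) * w x

variable {a1 a2 b z : ℝ} {w : ℕ → ℝ}

lemma tendsto_aux (c : ℝ) {d : ℝ} (hd : 0 < d) :
    Tendsto (fun n : ℕ => (c + n) / (d + n)) atTop (nhds 1) := by
  have hden : Tendsto (fun n : ℕ => d + (n : ℝ)) atTop atTop :=
    tendsto_atTop_add_const_left _ d tendsto_natCast_atTop_atTop
  have h1 : Tendsto (fun n : ℕ => (c - d) / (d + (n : ℝ))) atTop (nhds 0) :=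
    tendsto_const_nhds.div_atTop hden
  have h2 : Tendsto (fun n : ℕ => 1 + (c - d) / (d + (n : ℝ))) atTop (nhds 1) := by
    simpa using tendsto_const_nhds.add h1
  refine h2.congr fun n => ?_
  have hne : d + (n : ℝ) ≠ 0 := by positivity
  field_simp
  ring

lemma w_pos (ha1 : 0 < a1) (ha2 : 0 < a2) (hb : -1 < b) (hz0 : 0 < z)
    (hw : ∀ x : ℕ, w x =
      (ascPochhammer ℝ x).eval a1 * (ascPochhammer ℝ x).eval a2 * z ^ x /
        ((ascPochhammer ℝ x).eval (b + 1) * x.factorial)) :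
    ∀ x : ℕ, 0 < w x := by
  intro x
  rw [hw x]
  have hb1 : (0:ℝ) < b + 1 := by linarith
  have h1 := ascPochhammer_pos x a1 ha1
  have h2 := ascPochhammer_pos x a2 ha2
  have h3 := ascPochhammer_pos x (b+1) hb1
  have h4 : (0:ℝ) < (x.factorial : ℝ) := by positivity
  positivity

lemma w_ratio (ha1 : 0 < a1) (ha2 : 0 < a2) (hb : -1 < b) (hz0 : 0 < z)
    (hw : ∀ x : ℕ, w x =
      (ascPochhammer ℝ x).eval a1 * (ascPochhammer ℝ x).eval a2 * z ^ x /
        ((ascPochhammer ℝ x).eval (b + 1) * x.factorial)) :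
    ∀ x : ℕ, w (x+1) * ((b + 1 + x) * ((x:ℝ) + 1)) = z * ((a1 + x) * (a2 + x)) * w x := by
  intro x
  have hb1 : (0:ℝ) < b + 1 := by linarith
  have h3 := ascPochhammer_pos x (b+1) hb1
  have h4 : (0:ℝ) < (x.factorial : ℝ) := by positivity
  rw [hw x, hw (x+1), ascPochhammer_succ_right]
  simp only [eval_mul, eval_add, eval_X, eval_natCast, Nat.factorial_succ]
  push_cast
  field_simp
  ring

lemma eval_abs_le (p : ℝ[X]) (x : ℕ) :
    |p.eval (x:ℝ)| ≤ (∑ i ∈ Finset.range (p.natDegree+1), |p.coeff i|) * ((x:ℝ)+1)^p.natDegree := by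
  rw [eval_eq_sum_range, Finset.sum_mul]
  refine (Finset.abs_sum_le_sum_abs _ _).trans (Finset.sum_le_sum fun i hi => ?_)
  rw [abs_mul, abs_pow, Nat.abs_cast]
  have hx : (0:ℝ) ≤ (x:ℝ) := Nat.cast_nonneg x
  have h1 : ((x:ℝ))^i ≤ ((x:ℝ)+1)^p.natDegree := by
    calc ((x:ℝ))^i ≤ ((x:ℝ)+1)^i := by gcongr; linarith
    _ ≤ ((x:ℝ)+1)^p.natDegree := by
        apply pow_le_pow_right₀ (by linarith) (Finset.mem_range_succ_iff.mp hi)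
  exact mul_le_mul_of_nonneg_left h1 (abs_nonneg _)

lemma summable_poly (ha1 : 0 < a1) (ha2 : 0 < a2) (hb : -1 < b) (hz0 : 0 < z) (hz1 : z < 1)
    (hw : ∀ x : ℕ, w x =
      (ascPochhammer ℝ x).eval a1 * (ascPochhammer ℝ x).eval a2 * z ^ x /
        ((ascPochhammer ℝ x).eval (b + 1) * x.factorial))
    (p : ℝ[X]) : Summable (fun x : ℕ => p.eval (x:ℝ) * w x) := by
  have hwp := w_pos ha1 ha2 hb hz0 hw
  have hb1 : (0:ℝ) < b + 1 := by linarith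
  set D := p.natDegree with hD
  have hg : Summable (fun x : ℕ => ((x:ℝ)+1)^D * w x) := by
    apply summable_of_ratio_test_tendsto_lt_one hz1
    · exact Eventually.of_forall fun n => by have := hwp n; positivity
    · have key : ∀ n : ℕ,
          ‖(((n+1:ℕ):ℝ)+1)^D * w (n+1)‖ / ‖((n:ℝ)+1)^D * w n‖
            = ((2+(n:ℝ))/(1+(n:ℝ)))^D *
              (z * (((a1+(n:ℝ))/(1+(n:ℝ))) * ((a2+(n:ℝ))/((b+1)+(n:ℝ))))) := by
        intro n
        have h1 : (0:ℝ) < 1 + (n:ℝ) := by positivity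
        have h2 : (0:ℝ) < b+1+(n:ℝ) := by positivity
        have hwn := hwp n
        have hwn1 := hwp (n+1)
        have hr := w_ratio ha1 ha2 hb hz0 hw n
        have hw1 : w (n+1) = z * ((a1 + n) * (a2 + n)) * w n / ((b + 1 + n) * ((n:ℝ) + 1)) := by
          rw [eq_div_iff (by positivity)]
          linarith [hr]
        rw [Real.norm_eq_abs, Real.norm_eq_abs,
          abs_of_pos (by positivity), abs_of_pos (by positivity), hw1]
        push_cast
        rw [div_pow]
        field_simp
        ring
      have t1 : Tendsto (fun n : ℕ => ((2+(n:ℝ))/(1+(n:ℝ)))^D) atTop (nhds 1) := by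
        have := (tendsto_aux 2 (one_pos)).pow D
        simpa using this
      have t2 := tendsto_aux a1 (one_pos)
      have t3 := tendsto_aux a2 hb1
      have tall : Tendsto (fun n : ℕ => ((2+(n:ℝ))/(1+(n:ℝ)))^D *
              (z * (((a1+(n:ℝ))/(1+(n:ℝ))) * ((a2+(n:ℝ))/((b+1)+(n:ℝ))))))
            atTop (nhds (1 * (z * (1 * 1)))) :=
        t1.mul ((tendsto_const_nhds).mul (t2.mul t3))
      rw [show (1:ℝ) * (z * (1*1)) = z by ring] at tall
      exact tall.congr fun n => (key n).symm
  set A := ∑ i ∈ Finset.range (D+1), |p.coeff i| with hA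
  refine Summable.of_norm_bounded (hg.mul_left A) ?_
  intro x
  have hwx := hwp x
  rw [Real.norm_eq_abs, abs_mul, abs_of_pos hwx]
  show |eval (↑x) p| * w x ≤ A * ((↑x + 1) ^ D * w x)
  rw [← mul_assoc]
  exact mul_le_mul_of_nonneg_right (eval_abs_le p x) (le_of_lt hwx)


variable (ha1 : 0 < a1) (ha2 : 0 < a2) (hb : -1 < b) (hz0 : 0 < z) (hz1 : z < 1)
    (hw : ∀ x : ℕ, w x =
      (ascPochhammer ℝ x).eval a1 * (ascPochhammer ℝ x).eval a2 * z ^ x /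
        ((ascPochhammer ℝ x).eval (b + 1) * x.factorial))

include ha1 ha2 hb hz0 hz1 hw in
lemma L_add (p q : ℝ[X]) : L w (p + q) = L w p + L w q := by
  unfold L
  simp only [eval_add, add_mul]
  exact Summable.tsum_add (summable_poly ha1 ha2 hb hz0 hz1 hw p) (summable_poly ha1 ha2 hb hz0 hz1 hw q)

lemma L_Cmul (a : ℝ) (p : ℝ[X]) : L w (C a * p) = a * L w p := by
  unfold L
  simp only [eval_mul, eval_C, mul_assoc]
  exact tsum_mul_left

include ha1 ha2 hb hz0 hz1 hw in
lemma pearson (q : ℝ[X]) :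
    L w ((X*X + C b * X) * q)
      = z * L w ((X*X + C (a1+a2) * X + C (a1*a2)) * q.comp (X + C 1)) := by
  have hsum := summable_poly ha1 ha2 hb hz0 hz1 hw ((X*X + C b * X) * q)
  unfold L
  rw [Summable.tsum_eq_zero_add hsum]
  have h0 : ((X*X + C b * X) * q).eval ((0:ℕ):ℝ) * w 0 = 0 := by simp
  rw [h0, zero_add]
  have hpt : ∀ x : ℕ, ((X*X + C b * X) * q).eval (((x+1:ℕ)):ℝ) * w (x+1)
      = z * (((X*X + C (a1+a2) * X + C (a1*a2)) * q.comp (X + C 1)).eval (x:ℝ) * w x) := by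
    intro x
    have hr := w_ratio ha1 ha2 hb hz0 hw x
    simp only [eval_mul, eval_add, eval_X, eval_C, eval_comp]
    push_cast
    linear_combination (eval ((x:ℝ)+1) q) * hr
  rw [tsum_congr hpt, tsum_mul_left]


variable {P : ℕ → ℝ[X]} {h β γ : ℕ → ℝ}
variable (hmonic : ∀ n, (P n).Monic) (hdeg : ∀ n, (P n).natDegree = n)
    (hh : ∀ n, h n ≠ 0)
    (horth : ∀ n m : ℕ, (∑' x : ℕ, (P n * P m).eval (x : ℝ) * w x) = if n = m then h n else 0)
    (hγ0 : γ 0 = 0)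
    (hrec : ∀ n : ℕ, X * P n = P (n + 1) + C (β n) * P n + C (γ n) * P (n - 1))

include horth in
lemma LPP (n m : ℕ) : L w (P n * P m) = if n = m then h n else 0 := horth n m

include ha1 ha2 hb hz0 hz1 hw hmonic hdeg horth in
lemma orth_lower : ∀ N, ∀ q : ℝ[X], (∀ j, N ≤ j → q.coeff j = 0) → ∀ n, N ≤ n →
    L w (q * P n) = 0 := by
  intro N
  induction N with
  | zero =>
    intro q hq n _
    have hq0 : q = 0 := by
      ext j; simpa using hq j (Nat.zero_le j)
    simp [hq0, L]
  | succ N ih =>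
    intro q hq n hn
    set r := q - C (q.coeff N) * P N with hrdef
    have hr : ∀ j, N ≤ j → r.coeff j = 0 := by
      intro j hj
      rcases eq_or_lt_of_le hj with rfl | hlt
      · have h1 : (P N).coeff N = 1 := by
          have := (hmonic N).coeff_natDegree
          rwa [hdeg N] at this
        simp [hrdef, h1]
      · have h1 : (P N).coeff j = 0 :=
          coeff_eq_zero_of_natDegree_lt (by rw [hdeg N]; exact hlt)
        have h2 : q.coeff j = 0 := hq j (by omega)
        simp [hrdef, h1, h2]
    have e : q * P n = r * P n + C (q.coeff N) * (P N * P n) := by rw [hrdef]; ring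
    rw [e, L_add ha1 ha2 hb hz0 hz1 hw, L_Cmul,
      ih r hr n (by omega), LPP horth, if_neg (by omega)]
    ring

include ha1 ha2 hb hz0 hz1 hw hrec in
lemma LX (n m : ℕ) : L w (X * P n * P m) =
    L w (P (n+1) * P m) + β n * L w (P n * P m) + γ n * L w (P (n-1) * P m) := by
  have e : X * P n * P m = P (n+1) * P m + C (β n) * (P n * P m) + C (γ n) * (P (n-1) * P m) := by
    rw [hrec n]; ring
  rw [e, L_add ha1 ha2 hb hz0 hz1 hw, L_add ha1 ha2 hb hz0 hz1 hw, L_Cmul, L_Cmul]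

include ha1 ha2 hb hz0 hz1 hw hrec in
lemma LX2 (n m : ℕ) : L w ((X * P n) * (X * P m)) =
    L w (P (n+1) * P (m+1)) + β m * L w (P (n+1) * P m) + γ m * L w (P (n+1) * P (m-1))
    + β n * L w (P n * P (m+1)) + (β n * β m) * L w (P n * P m)
    + (β n * γ m) * L w (P n * P (m-1))
    + γ n * L w (P (n-1) * P (m+1)) + (γ n * β m) * L w (P (n-1) * P m)
    + (γ n * γ m) * L w (P (n-1) * P (m-1)) := by
  have e : (X * P n) * (X * P m) =
      P (n+1) * P (m+1) + C (β m) * (P (n+1) * P m) + C (γ m) * (P (n+1) * P (m-1))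
      + C (β n) * (P n * P (m+1)) + C (β n * β m) * (P n * P m)
      + C (β n * γ m) * (P n * P (m-1))
      + C (γ n) * (P (n-1) * P (m+1)) + C (γ n * β m) * (P (n-1) * P m)
      + C (γ n * γ m) * (P (n-1) * P (m-1)) := by
    rw [hrec n, hrec m]; simp only [C_mul]; ring
  rw [e]
  rw [L_add ha1 ha2 hb hz0 hz1 hw, L_add ha1 ha2 hb hz0 hz1 hw,
    L_add ha1 ha2 hb hz0 hz1 hw, L_add ha1 ha2 hb hz0 hz1 hw,
    L_add ha1 ha2 hb hz0 hz1 hw, L_add ha1 ha2 hb hz0 hz1 hw,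
    L_add ha1 ha2 hb hz0 hz1 hw, L_add ha1 ha2 hb hz0 hz1 hw,
    L_Cmul, L_Cmul, L_Cmul, L_Cmul, L_Cmul, L_Cmul, L_Cmul, L_Cmul]


include ha1 ha2 hb hz0 hz1 hw hrec horth in
lemma hstep (k : ℕ) : h (k+1) = γ (k+1) * h k := by
  have A := LX ha1 ha2 hb hz0 hz1 hw hrec (k+1) k
  have B := LX ha1 ha2 hb hz0 hz1 hw hrec k (k+1)
  simp only [LPP horth, Nat.add_sub_cancel, Nat.sub_self, Nat.succ_sub_one] at A B
  have e : X * P (k+1) * P k = X * P k * P (k+1) := by ring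
  rw [e] at A
  rw [A] at B
  split_ifs at B <;> first | (exfalso; first | omega | assumption | exact ‹¬True› trivial) | linarith [B]

include ha1 ha2 hb hz0 hz1 hw hrec horth hγ0 in
lemma vXnn (n : ℕ) : L w (X * P n * P n) = β n * h n := by
  rcases n with _ | k
  · have A := LX ha1 ha2 hb hz0 hz1 hw hrec 0 0
    simp only [LPP horth, Nat.add_sub_cancel, Nat.sub_self, Nat.succ_sub_one] at A
    split_ifs at A <;> first | (exfalso; first | omega | assumption | exact ‹¬True› trivial) | (rw [A, hγ0]; ring)
  · have A := LX ha1 ha2 hb hz0 hz1 hw hrec (k+1) (k+1)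
    simp only [LPP horth, Nat.add_sub_cancel, Nat.sub_self, Nat.succ_sub_one] at A
    split_ifs at A <;> first | (exfalso; first | omega | assumption | exact ‹¬True› trivial) | (rw [A]; ring)

include ha1 ha2 hb hz0 hz1 hw hrec horth hγ0 in
lemma vXXnn (n : ℕ) : L w ((X * P n) * (X * P n)) = (γ (n+1) + γ n + β n^2) * h n := by
  rcases n with _ | k
  · have A := LX2 ha1 ha2 hb hz0 hz1 hw hrec 0 0
    simp only [LPP horth, Nat.add_sub_cancel, Nat.sub_self, Nat.succ_sub_one] at A
    split_ifs at A <;> first | (exfalso; first | omega | assumption | exact ‹¬True› trivial) |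
      (rw [A, hγ0]; linear_combination hstep ha1 ha2 hb hz0 hz1 hw horth hrec 0)
  · have A := LX2 ha1 ha2 hb hz0 hz1 hw hrec (k+1) (k+1)
    simp only [LPP horth, Nat.add_sub_cancel, Nat.sub_self, Nat.succ_sub_one] at A
    split_ifs at A <;> first | (exfalso; first | omega | assumption | exact ‹¬True› trivial) |
      (rw [A]; linear_combination hstep ha1 ha2 hb hz0 hz1 hw horth hrec (k+1)
        - γ (k+1) * hstep ha1 ha2 hb hz0 hz1 hw horth hrec k)

include ha1 ha2 hb hz0 hz1 hw hrec horth in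
lemma vX10 (k : ℕ) : L w (X * P (k+1) * P k) = h (k+1) := by
  have A := LX ha1 ha2 hb hz0 hz1 hw hrec (k+1) k
  simp only [LPP horth, Nat.add_sub_cancel, Nat.sub_self, Nat.succ_sub_one] at A
  split_ifs at A <;> first | (exfalso; first | omega | assumption | exact ‹¬True› trivial) |
    (rw [A]; linear_combination (-1 : ℝ) * hstep ha1 ha2 hb hz0 hz1 hw horth hrec k)

include ha1 ha2 hb hz0 hz1 hw hrec horth hγ0 in
lemma vXX10 (k : ℕ) : L w ((X * P (k+1)) * (X * P k)) = (β (k+1) + β k) * h (k+1) := by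
  rcases k with _ | j
  · have A := LX2 ha1 ha2 hb hz0 hz1 hw hrec 1 0
    simp only [LPP horth, Nat.add_sub_cancel, Nat.sub_self, Nat.succ_sub_one] at A
    split_ifs at A <;> first | (exfalso; first | omega | assumption | exact ‹¬True› trivial) |
      (rw [A, hγ0]; linear_combination (-(β 0)) * hstep ha1 ha2 hb hz0 hz1 hw horth hrec 0)
  · have A := LX2 ha1 ha2 hb hz0 hz1 hw hrec (j+2) (j+1)
    simp only [LPP horth, Nat.add_sub_cancel, Nat.sub_self, Nat.succ_sub_one] at A
    split_ifs at A <;> first | (exfalso; first | omega | assumption | exact ‹¬True› trivial) |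
      (rw [A]; linear_combination (-(β (j+1))) * hstep ha1 ha2 hb hz0 hz1 hw horth hrec (j+1))

include ha1 ha2 hb hz0 hz1 hw hrec horth in
lemma vXX20 (k : ℕ) : L w ((X * P (k+2)) * (X * P k)) = h (k+2) := by
  have A := LX2 ha1 ha2 hb hz0 hz1 hw hrec (k+2) k
  simp only [LPP horth, Nat.add_sub_cancel, Nat.sub_self, Nat.succ_sub_one] at A
  split_ifs at A <;> first | (exfalso; first | omega | assumption | exact ‹¬True› trivial) |
    (rw [A]; linear_combination (-1 : ℝ) * hstep ha1 ha2 hb hz0 hz1 hw horth hrec (k+1))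

include ha1 ha2 hb hz0 hz1 hw hrec horth in
lemma vX20 (k : ℕ) : L w (X * P (k+2) * P k) = 0 := by
  have A := LX ha1 ha2 hb hz0 hz1 hw hrec (k+2) k
  simp only [LPP horth, Nat.add_sub_cancel, Nat.sub_self, Nat.succ_sub_one] at A
  split_ifs at A <;> first | (exfalso; first | omega | assumption | exact ‹¬True› trivial) | (rw [A]; ring)

include horth in
lemma vP20 (k : ℕ) : L w (P (k+2) * P k) = 0 := by
  rw [LPP horth, if_neg (by omega)]

include horth in
lemma vP10 (k : ℕ) : L w (P (k+1) * P k) = 0 := by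
  rw [LPP horth, if_neg (by omega)]


include ha1 ha2 hb hz0 hz1 hw in
lemma Lsig (n m : ℕ) : L w ((X*X + C b * X) * (P n * P m)) =
    L w ((X * P n) * (X * P m)) + b * L w (X * P n * P m) := by
  have e : (X*X + C b * X) * (P n * P m) = (X * P n) * (X * P m) + C b * (X * P n * P m) := by
    ring
  rw [e, L_add ha1 ha2 hb hz0 hz1 hw, L_Cmul]

include ha1 ha2 hb hz0 hz1 hw in
lemma Lrho (n m : ℕ) : L w ((X*X + C (a1+a2) * X + C (a1*a2)) * (P n * P m)) =
    L w ((X * P n) * (X * P m)) + (a1+a2) * L w (X * P n * P m) + (a1*a2) * L w (P n * P m) := by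
  have e : (X*X + C (a1+a2) * X + C (a1*a2)) * (P n * P m)
      = (X * P n) * (X * P m) + C (a1+a2) * (X * P n * P m) + C (a1*a2) * (P n * P m) := by
    ring
  rw [e, L_add ha1 ha2 hb hz0 hz1 hw, L_add ha1 ha2 hb hz0 hz1 hw, L_Cmul, L_Cmul]

include ha1 ha2 hb hz0 hz1 hw horth hγ0 hrec in
lemma Lsig_nn (n : ℕ) : L w ((X*X + C b * X) * (P n * P n)) =
    (γ (n+1) + γ n + β n^2 + b * β n) * h n := by
  rw [Lsig ha1 ha2 hb hz0 hz1 hw, vXXnn ha1 ha2 hb hz0 hz1 hw horth hγ0 hrec,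
    vXnn ha1 ha2 hb hz0 hz1 hw horth hγ0 hrec]
  ring

include ha1 ha2 hb hz0 hz1 hw horth hγ0 hrec in
lemma Lsig_10 (k : ℕ) : L w ((X*X + C b * X) * (P (k+1) * P k)) =
    (β (k+1) + β k + b) * h (k+1) := by
  rw [Lsig ha1 ha2 hb hz0 hz1 hw, vXX10 ha1 ha2 hb hz0 hz1 hw horth hγ0 hrec,
    vX10 ha1 ha2 hb hz0 hz1 hw horth hrec]
  ring

include ha1 ha2 hb hz0 hz1 hw horth hrec in
lemma Lsig_20 (k : ℕ) : L w ((X*X + C b * X) * (P (k+2) * P k)) = h (k+2) := by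
  rw [Lsig ha1 ha2 hb hz0 hz1 hw, vXX20 ha1 ha2 hb hz0 hz1 hw horth hrec,
    vX20 ha1 ha2 hb hz0 hz1 hw horth hrec]
  ring

include ha1 ha2 hb hz0 hz1 hw horth hγ0 hrec in
lemma Lrho_nn (n : ℕ) : L w ((X*X + C (a1+a2) * X + C (a1*a2)) * (P n * P n)) =
    (γ (n+1) + γ n + β n^2 + (a1+a2) * β n + a1*a2) * h n := by
  rw [Lrho ha1 ha2 hb hz0 hz1 hw, vXXnn ha1 ha2 hb hz0 hz1 hw horth hγ0 hrec,
    vXnn ha1 ha2 hb hz0 hz1 hw horth hγ0 hrec, LPP horth, if_pos rfl]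
  ring

include ha1 ha2 hb hz0 hz1 hw horth hγ0 hrec in
lemma Lrho_10 (k : ℕ) : L w ((X*X + C (a1+a2) * X + C (a1*a2)) * (P (k+1) * P k)) =
    (β (k+1) + β k + (a1+a2)) * h (k+1) := by
  rw [Lrho ha1 ha2 hb hz0 hz1 hw, vXX10 ha1 ha2 hb hz0 hz1 hw horth hγ0 hrec,
    vX10 ha1 ha2 hb hz0 hz1 hw horth hrec, vP10 horth]
  ring

include ha1 ha2 hb hz0 hz1 hw horth hrec in
lemma Lrho_20 (k : ℕ) : L w ((X*X + C (a1+a2) * X + C (a1*a2)) * (P (k+2) * P k)) = h (k+2) := by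
  rw [Lrho ha1 ha2 hb hz0 hz1 hw, vXX20 ha1 ha2 hb hz0 hz1 hw horth hrec,
    vX20 ha1 ha2 hb hz0 hz1 hw horth hrec, vP20 horth]
  ring


lemma tc2 {p : ℝ[X]} {k : ℕ} (hm : p.Monic) (hd : p.natDegree = k+2) (r : ℝ) :
    ((taylor r) p).coeff (k+2) = 1 := by
  have hc : p.coeff (k+2) = 1 := by
    have := hm.coeff_natDegree; rwa [hd] at this
  have hh : (hasseDeriv (k+2)) p = C 1 := by
    ext j
    rw [hasseDeriv_coeff]
    rcases j with _ | j
    · simp [hc]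
    · have h0 : p.coeff (j+1 + (k+2)) = 0 :=
        coeff_eq_zero_of_natDegree_lt (by rw [hd]; omega)
      simp [h0, coeff_C, coeff_one]
  rw [taylor_coeff, hh]
  simp

lemma tc1 {p : ℝ[X]} {k : ℕ} (hm : p.Monic) (hd : p.natDegree = k+2) (r : ℝ) :
    ((taylor r) p).coeff (k+1) = p.coeff (k+1) + ((k:ℝ)+2) * r := by
  have hc : p.coeff (k+2) = 1 := by
    have := hm.coeff_natDegree; rwa [hd] at this
  have hh : (hasseDeriv (k+1)) p = C (p.coeff (k+1)) + C ((k:ℝ)+2) * X := by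
    ext j
    rw [hasseDeriv_coeff]
    rcases j with _ | j
    · simp
    rcases j with _ | j
    · have : (1 + (k+1)) = k + 2 := by omega
      rw [this]
      simp [hc, Nat.choose_succ_self_right]
      push_cast
      ring
    · have h0 : p.coeff (j+2 + (k+1)) = 0 :=
        coeff_eq_zero_of_natDegree_lt (by rw [hd]; omega)
      simp [h0, coeff_C, coeff_one]
  rw [taylor_coeff, hh]
  simp

lemma tc0 {p : ℝ[X]} {k : ℕ} (hm : p.Monic) (hd : p.natDegree = k+2) (r : ℝ) :
    ((taylor r) p).coeff k = p.coeff k + ((k:ℝ)+1) * p.coeff (k+1) * r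
      + (((k+2).choose 2 : ℕ):ℝ) * r^2 := by
  have hc : p.coeff (k+2) = 1 := by
    have := hm.coeff_natDegree; rwa [hd] at this
  have hch : (k+2).choose k = (k+2).choose 2 := by
    rw [← Nat.choose_symm (by omega : 2 ≤ k+2)]
    try congr 1
    try omega
  have hh : (hasseDeriv k) p = C (p.coeff k) + C (((k:ℝ)+1) * p.coeff (k+1)) * X
      + C ((((k+2).choose 2:ℕ)):ℝ) * X^2 := by
    ext j
    rw [hasseDeriv_coeff]
    rcases j with _ | j
    · simp
    rcases j with _ | j
    · have e1 : (1 + k) = k + 1 := by omega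
      rw [e1]
      simp [Nat.choose_succ_self_right]
      try push_cast
      try ring
    rcases j with _ | j
    · have e1 : (2 + k) = k + 2 := by omega
      rw [e1, hch]
      simp [hc, coeff_C, coeff_one]
    · have h0 : p.coeff (j+3 + k) = 0 :=
        coeff_eq_zero_of_natDegree_lt (by rw [hd]; omega)
      simp [h0, coeff_C, coeff_one]
  rw [taylor_coeff, hh]
  simp
  try ring

include hrec hmonic hdeg in
lemma hcfact (k : ℕ) : (P (k+2)).coeff (k+1) = (P (k+1)).coeff k - β (k+1) := by
  have e := congrArg (fun q : ℝ[X] => q.coeff (k+1)) (hrec (k+1))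
  simp only [coeff_X_mul, coeff_add, coeff_C_mul, Nat.add_sub_cancel] at e
  have h1 : (P (k+1)).coeff (k+1) = 1 := by
    have := (hmonic (k+1)).coeff_natDegree; rwa [hdeg (k+1)] at this
  have h2 : (P k).coeff (k+1) = 0 :=
    coeff_eq_zero_of_natDegree_lt (by rw [hdeg k]; omega)
  rw [h1, h2] at e
  linarith


include hmonic hdeg hrec in
lemma Pexpand (k : ℕ) (r : ℝ) :
    ∃ Rm : ℝ[X], (∀ j, k ≤ j → Rm.coeff j = 0) ∧
      (taylor r) (P (k+2)) = P (k+2) + C (((k:ℝ)+2)*r) * P (k+1)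
        + C ((((k+2).choose 2 : ℕ):ℝ)*r^2 - ((k:ℝ)+1)*(β (k+1))*r - (P (k+1)).coeff k * r)
            * P k + Rm := by
  set A := ((k:ℝ)+2)*r with hA
  set B := (((k+2).choose 2 : ℕ):ℝ)*r^2 - ((k:ℝ)+1)*(β (k+1))*r - (P (k+1)).coeff k * r with hB
  refine ⟨(taylor r) (P (k+2)) - (P (k+2) + C A * P (k+1) + C B * P k), ?_, by ring⟩
  intro j hj
  have hP2 : (P (k+2)).coeff (k+2) = 1 := by
    have := (hmonic (k+2)).coeff_natDegree; rwa [hdeg (k+2)] at this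
  have hP1 : (P (k+1)).coeff (k+1) = 1 := by
    have := (hmonic (k+1)).coeff_natDegree; rwa [hdeg (k+1)] at this
  have hP0 : (P k).coeff k = 1 := by
    have := (hmonic k).coeff_natDegree; rwa [hdeg k] at this
  obtain ⟨i, rfl⟩ : ∃ i, j = k + i := ⟨j - k, by omega⟩
  simp only [coeff_sub, coeff_add, coeff_C_mul]
  rcases i with _ | _ | _ | i
  · -- j = k
    simp only [Nat.add_zero]
    rw [tc0 (hmonic (k+2)) (hdeg (k+2)) r, hcfact hmonic hdeg hrec k, hP0]
    have hc1 : (P (k+1)).coeff k = (P (k+1)).coeff k := rfl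
    rw [hB, hA]
    ring
  · -- j = k+1
    rw [tc1 (hmonic (k+2)) (hdeg (k+2)) r, hP1]
    have h2 : (P k).coeff (k+1) = 0 :=
      coeff_eq_zero_of_natDegree_lt (by rw [hdeg k]; omega)
    rw [h2, hA]
    ring
  · -- j = k+2
    rw [tc2 (hmonic (k+2)) (hdeg (k+2)) r, hP2]
    have h1 : (P (k+1)).coeff (k+2) = 0 :=
      coeff_eq_zero_of_natDegree_lt (by rw [hdeg (k+1)]; omega)
    have h2 : (P k).coeff (k+2) = 0 :=
      coeff_eq_zero_of_natDegree_lt (by rw [hdeg k]; omega)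
    rw [h1, h2]
    ring
  · -- j ≥ k+3
    have e3 : k + (i+3) = (k+2) + (i+1) := by omega
    rw [e3]
    have h0 : ((taylor r) (P (k+2))).coeff ((k+2)+(i+1)) = 0 :=
      coeff_eq_zero_of_natDegree_lt (by rw [natDegree_taylor, hdeg (k+2)]; omega)
    have h1 : (P (k+2)).coeff ((k+2)+(i+1)) = 0 :=
      coeff_eq_zero_of_natDegree_lt (by rw [hdeg (k+2)]; omega)
    have h2 : (P (k+1)).coeff ((k+2)+(i+1)) = 0 :=
      coeff_eq_zero_of_natDegree_lt (by rw [hdeg (k+1)]; omega)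
    have h3 : (P k).coeff ((k+2)+(i+1)) = 0 :=
      coeff_eq_zero_of_natDegree_lt (by rw [hdeg k]; omega)
    rw [h0, h1, h2, h3]
    ring

include ha1 ha2 hb hz0 hz1 hw hmonic hdeg horth in
lemma orthW (k : ℕ) (W Rm : ℝ[X]) (hW : W.natDegree ≤ 2)
    (hR : ∀ j, k ≤ j → Rm.coeff j = 0) : L w ((W * Rm) * P (k+2)) = 0 := by
  apply orth_lower ha1 ha2 hb hz0 hz1 hw hmonic hdeg horth (k+2) _ _ (k+2) le_rfl
  intro j hj
  by_cases h0 : Rm = 0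
  · simp [h0]
  · have hk : 1 ≤ k := by
      by_contra hk
      exact h0 (by ext i; simpa using hR i (by omega))
    have hdR : Rm.natDegree ≤ k - 1 :=
      natDegree_le_iff_coeff_eq_zero.mpr fun N hN => hR N (by omega)
    have hmul := natDegree_mul_le (p := W) (q := Rm)
    exact coeff_eq_zero_of_natDegree_lt (by omega)


lemma comp_shift (p : ℝ[X]) : ((taylor (-1)) p * p).comp (X + C 1) = (taylor 1) p * p := by
  rw [mul_comp, taylor_apply, comp_assoc]
  have hX : (X + C (-1) : ℝ[X]).comp (X + C 1) = X := by
    simp only [add_comp, X_comp, C_comp, neg_comp, map_neg]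
    ring
  rw [hX, comp_X, ← taylor_apply, mul_comm]

include ha1 ha2 hb hz0 hz1 hw hmonic hdeg horth in
lemma Lcomb (W : ℝ[X]) (hW : W.natDegree ≤ 2) (k : ℕ) (c1 c2 : ℝ) (Rm : ℝ[X])
    (hR : ∀ j, k ≤ j → Rm.coeff j = 0) :
    L w (W * ((P (k+2) + C c1 * P (k+1) + C c2 * P k + Rm) * P (k+2)))
      = L w (W * (P (k+2) * P (k+2))) + c1 * L w (W * (P (k+2) * P (k+1)))
        + c2 * L w (W * (P (k+2) * P k)) := by
  have e : W * ((P (k+2) + C c1 * P (k+1) + C c2 * P k + Rm) * P (k+2))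
      = W * (P (k+2) * P (k+2)) + C c1 * (W * (P (k+2) * P (k+1)))
        + C c2 * (W * (P (k+2) * P k)) + (W * Rm) * P (k+2) := by ring
  rw [e, L_add ha1 ha2 hb hz0 hz1 hw, L_add ha1 ha2 hb hz0 hz1 hw,
    L_add ha1 ha2 hb hz0 hz1 hw, L_Cmul, L_Cmul,
    orthW ha1 ha2 hb hz0 hz1 hw hmonic hdeg horth k W Rm hW hR, add_zero]

include ha1 ha2 hb hz0 hz1 hw hmonic hdeg hh horth hγ0 hrec in
lemma Egen (k : ℕ) :
    γ (k+3) + γ (k+2) + β (k+2)^2 + b * β (k+2)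
      - ((k:ℝ)+2) * (β (k+2) + β (k+1) + b)
      + ((((k+2).choose 2:ℕ):ℝ) + ((k:ℝ)+1)*β (k+1) + (P (k+1)).coeff k)
    = z * (γ (k+3) + γ (k+2) + β (k+2)^2 + (a1+a2) * β (k+2) + a1*a2
      + ((k:ℝ)+2) * (β (k+2) + β (k+1) + (a1+a2))
      + ((((k+2).choose 2:ℕ):ℝ) - ((k:ℝ)+1)*β (k+1) - (P (k+1)).coeff k)) := by
  obtain ⟨RG, hRG, hGexp⟩ := Pexpand hmonic hdeg hrec k (-1)
  obtain ⟨RH, hRH, hHexp⟩ := Pexpand hmonic hdeg hrec k 1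
  have hσdeg : (X*X + C b * X : ℝ[X]).natDegree ≤ 2 := by compute_degree
  have hρdeg : (X*X + C (a1+a2) * X + C (a1*a2) : ℝ[X]).natDegree ≤ 2 := by compute_degree
  have hpear := pearson ha1 ha2 hb hz0 hz1 hw ((taylor (-1)) (P (k+2)) * P (k+2))
  rw [comp_shift] at hpear
  rw [hGexp, hHexp] at hpear
  rw [Lcomb ha1 ha2 hb hz0 hz1 hw hmonic hdeg horth _ hσdeg k _ _ RG hRG,
    Lcomb ha1 ha2 hb hz0 hz1 hw hmonic hdeg horth _ hρdeg k _ _ RH hRH] at hpear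
  rw [Lsig_nn ha1 ha2 hb hz0 hz1 hw horth hγ0 hrec (k+2),
    Lsig_10 ha1 ha2 hb hz0 hz1 hw horth hγ0 hrec (k+1),
    Lsig_20 ha1 ha2 hb hz0 hz1 hw horth hrec k,
    Lrho_nn ha1 ha2 hb hz0 hz1 hw horth hγ0 hrec (k+2),
    Lrho_10 ha1 ha2 hb hz0 hz1 hw horth hγ0 hrec (k+1),
    Lrho_20 ha1 ha2 hb hz0 hz1 hw horth hrec k] at hpear
  apply mul_right_cancel₀ (hh (k+2))
  linear_combination hpear

include ha1 ha2 hb hz0 hz1 hw hmonic hdeg hh horth hγ0 hrec in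
lemma Eone :
    γ 2 + γ 1 + β 1^2 + b * β 1 - (β 1 + β 0 + b)
      = z * (γ 2 + γ 1 + β 1^2 + (a1+a2) * β 1 + a1*a2 + (β 1 + β 0 + (a1+a2))) := by
  have hP0 : P 0 = 1 := (hmonic 0).natDegree_eq_zero.mp (hdeg 0)
  have hP1 : P 1 = X + C ((P 1).coeff 0) := (hmonic 1).eq_X_add_C (hdeg 1)
  have htm : (taylor (-1)) (P 1) = P 1 - C 1 := by
    rw [taylor_apply]
    conv_lhs => rw [hP1]
    rw [add_comp, X_comp, C_comp, show (C (-1):ℝ[X]) = -C 1 from map_neg C 1]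
    conv_rhs => rw [hP1]
    ring
  have htp : (taylor 1) (P 1) = P 1 + C 1 := by
    rw [taylor_apply]
    conv_lhs => rw [hP1]
    rw [add_comp, X_comp, C_comp]
    conv_rhs => rw [hP1]
    ring
  have hpear := pearson ha1 ha2 hb hz0 hz1 hw ((taylor (-1)) (P 1) * P 1)
  rw [comp_shift, htm, htp] at hpear
  have eL : (X*X + C b * X) * ((P 1 - C 1) * P 1)
      = (X*X + C b * X) * (P 1 * P 1) + C (-1) * ((X*X + C b * X) * (P 1 * P 0)) := by
    rw [hP0]; simp only [map_neg, map_one]; ring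
  have eR : (X*X + C (a1+a2) * X + C (a1*a2)) * ((P 1 + C 1) * P 1)
      = (X*X + C (a1+a2) * X + C (a1*a2)) * (P 1 * P 1)
        + C 1 * ((X*X + C (a1+a2) * X + C (a1*a2)) * (P 1 * P 0)) := by
    rw [hP0]; ring
  rw [eL, eR, L_add ha1 ha2 hb hz0 hz1 hw, L_add ha1 ha2 hb hz0 hz1 hw, L_Cmul, L_Cmul,
    Lsig_nn ha1 ha2 hb hz0 hz1 hw horth hγ0 hrec 1,
    Lsig_10 ha1 ha2 hb hz0 hz1 hw horth hγ0 hrec 0,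
    Lrho_nn ha1 ha2 hb hz0 hz1 hw horth hγ0 hrec 1,
    Lrho_10 ha1 ha2 hb hz0 hz1 hw horth hγ0 hrec 0] at hpear
  apply mul_right_cancel₀ (hh 1)
  linear_combination hpear

include ha1 ha2 hb hz0 hz1 hw hmonic hdeg hh horth hγ0 hrec in
lemma Ezero :
    γ 1 + γ 0 + β 0^2 + b * β 0
      = z * (γ 1 + γ 0 + β 0^2 + (a1+a2) * β 0 + a1*a2) := by
  have hP0 : P 0 = 1 := (hmonic 0).natDegree_eq_zero.mp (hdeg 0)
  have hpear := pearson ha1 ha2 hb hz0 hz1 hw (P 0 * P 0)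
  rw [show ((P 0 * P 0 : ℝ[X]).comp (X + C 1)) = P 0 * P 0 by rw [hP0]; simp] at hpear
  rw [Lsig_nn ha1 ha2 hb hz0 hz1 hw horth hγ0 hrec 0,
    Lrho_nn ha1 ha2 hb hz0 hz1 hw horth hγ0 hrec 0] at hpear
  apply mul_right_cancel₀ (hh 0)
  linear_combination hpear

end GHahn

/-- first Laguerre–Freud equation for the generalized Hahn
polynomials of type I:
(1−z)∇ₙ(γ_{n+1}+γₙ) = z vₙ ∇ₙ(βₙ+n) − uₙ ∇ₙ(βₙ−n), n ≥ 1. -/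
theorem generalized_hahn_laguerre_freud_one
    (a1 a2 b z : ℝ) (ha1 : 0 < a1) (ha2 : 0 < a2) (hb : -1 < b)
    (hz0 : 0 < z) (hz1 : z < 1)
    (w : ℕ → ℝ)
    (hw : ∀ x : ℕ, w x =
      (ascPochhammer ℝ x).eval a1 * (ascPochhammer ℝ x).eval a2 * z ^ x /
        ((ascPochhammer ℝ x).eval (b + 1) * x.factorial))
    (P : ℕ → Polynomial ℝ) (h : ℕ → ℝ)
    (hmonic : ∀ n, (P n).Monic) (hdeg : ∀ n, (P n).natDegree = n)
    (hh : ∀ n, h n ≠ 0)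
    (horth : ∀ n m : ℕ,
      (∑' x : ℕ, (P n * P m).eval (x : ℝ) * w x) = if n = m then h n else 0)
    (β γ : ℕ → ℝ) (hγ0 : γ 0 = 0)
    (hrec : ∀ n : ℕ, X * P n = P (n + 1) + C (β n) * P n + C (γ n) * P (n - 1))
    (u v : ℕ → ℝ)
    (hu : ∀ n : ℕ, 1 ≤ n → u n = β n + β (n - 1) - (n : ℝ) + b + 1)
    (hv : ∀ n : ℕ, 1 ≤ n → v n = β n + β (n - 1) + (n : ℝ) - 1 + a1 + a2) :
    ∀ n : ℕ, 1 ≤ n →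
      (1 - z) * ((γ (n + 1) + γ n) - (γ n + γ (n - 1))) =
        z * v n * ((β n + (n : ℝ)) - (β (n - 1) + ((n : ℝ) - 1)))
          - u n * ((β n - (n : ℝ)) - (β (n - 1) - ((n : ℝ) - 1))) := by
  intro n hn
  have hP0 : P 0 = 1 := (hmonic 0).natDegree_eq_zero.mp (hdeg 0)
  rw [hu n hn, hv n hn]
  rcases n with _ | _ | _ | k
  · omega
  · -- n = 1
    have E1 := GHahn.Eone ha1 ha2 hb hz0 hz1 hw hmonic hdeg hh horth hγ0 hrec
    have E0 := GHahn.Ezero ha1 ha2 hb hz0 hz1 hw hmonic hdeg hh horth hγ0 hrec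
    norm_num
    linear_combination E1 - E0
  · -- n = 2
    have hcc1 : (P 1).coeff 0 = -β 0 := by
      have e := hrec 0
      simp only [Nat.zero_sub, zero_add] at e
      rw [hP0, hγ0] at e
      simp only [map_zero, add_zero, zero_mul, mul_one] at e
      have e0 := congrArg (fun q : ℝ[X] => q.coeff 0) e
      simp only [mul_one, coeff_X_zero, coeff_add, coeff_C_zero] at e0
      linarith
    have EG := GHahn.Egen ha1 ha2 hb hz0 hz1 hw hmonic hdeg hh horth hγ0 hrec 0
    have E1 := GHahn.Eone ha1 ha2 hb hz0 hz1 hw hmonic hdeg hh horth hγ0 hrec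
    norm_num at EG ⊢
    rw [hcc1] at EG
    linear_combination EG - E1
  · -- n = k+3
    have EA := GHahn.Egen ha1 ha2 hb hz0 hz1 hw hmonic hdeg hh horth hγ0 hrec (k+1)
    have EB := GHahn.Egen ha1 ha2 hb hz0 hz1 hw hmonic hdeg hh horth hγ0 hrec k
    have hcf := GHahn.hcfact hmonic hdeg hrec k
    simp only [show k+1+1 = k+2 from rfl, show k+1+2 = k+3 from rfl,
      show k+1+3 = k+4 from rfl] at EA
    rw [hcf] at EA
    have hch : ((((k+3).choose 2 : ℕ)):ℝ) = (((k+2).choose 2 : ℕ):ℝ) + ((k:ℝ)+2) := by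
      rw [show (k+3).choose 2 = (k+2).choose 1 + (k+2).choose 2 from Nat.choose_succ_succ _ _,
        Nat.choose_one_right]
      push_cast
      ring
    rw [hch] at EA
    simp only [show k+1+1+1 = k+3 from rfl, show k+3-1 = k+2 from rfl] at *
    push_cast at EA EB ⊢
    linear_combination EA - EB
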